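/- Let λ* = (λ₁*,…,λ₆*) ∈ ℂ⁶ satisfy λ₁* = 0 and λ₃* = λ₆*, and assume either λ₅* ≠ 0, or both λ₂* ≠ 0 and λ₄* ≠ 0 (i.e. λ* is a smooth point of the center set lying on I₁ only). Then the ideal of ℂ[λ₁,…,λ₆] generated by the Kapteyn–Bautin polynomials v₁, v₂, v₃, v₄ and the ideal generated by λ₁ and λ₃ − λ₆ coincide locally at λ*. -/

import Mathlib

open MvPolynomial

/-- The multiplicative set of polynomials not vanishing at `p`, i.e. the complement of
the maximal ideal of polynomials vanishing at `p`. -/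
def nonVanishing (K : Type*) [Field K] (p : Fin 6 → K) :
    Submonoid (MvPolynomial (Fin 6) K) where
  carrier := {f | eval p f ≠ 0}
  mul_mem' := by
    intro a b ha hb
    simp only [Set.mem_setOf_eq, map_mul] at ha hb ⊢
    exact mul_ne_zero ha hb
  one_mem' := by simp

/-- Two ideals of `K[λ₁,…,λ₆]` coincide locally at `p` if their extensions to the
localization of the polynomial ring at the maximal ideal of polynomials vanishing at `p`
(equivalently, the localization inverting all polynomials not vanishing at `p`) are equal. -/
def coincideLocally (K : Type*) [Field K] (p : Fin 6 → K)
    (I J : Ideal (MvPolynomial (Fin 6) K)) : Prop :=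
  Ideal.map (algebraMap (MvPolynomial (Fin 6) K) (Localization (nonVanishing K p))) I =
  Ideal.map (algebraMap (MvPolynomial (Fin 6) K) (Localization (nonVanishing K p))) J

/-- The Bautin ideal of the Kapteyn normal form, generated by the Kapteyn–Bautin
polynomials `v₁ = λ₁`, `v₂ = λ₅(λ₃−λ₆)`, `v₃ = λ₂λ₄(λ₃−λ₆)(λ₄+5λ₃−5λ₆)`,
`v₄ = λ₂λ₄(λ₃−λ₆)²(λ₃λ₆−2λ₆²−λ₂²)`, where `X 0 = λ₁, …, X 5 = λ₆`. -/
noncomputable def bautinIdeal (K : Type*) [Field K] : Ideal (MvPolynomial (Fin 6) K) :=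
  Ideal.span {X 0, X 4 * (X 2 - X 5),
    X 1 * X 3 * (X 2 - X 5) * (X 3 + 5 * X 2 - 5 * X 5),
    X 1 * X 3 * (X 2 - X 5) ^ 2 * (X 2 * X 5 - 2 * X 5 ^ 2 - X 1 ^ 2)}

/-- at a smooth point `λ*` of the center set lying on `I₁` only
(`λ₁* = 0`, `λ₃* = λ₆*`, and `λ₅* ≠ 0` or (`λ₂* ≠ 0` and `λ₄* ≠ 0`)), the Bautin ideal
coincides locally at `λ*` with the ideal `(λ₁, λ₃ − λ₆)`. -/
theorem stmt_4 (l1 l2 l3 l4 l5 l6 : ℂ)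
    (h1 : l1 = 0) (h36 : l3 = l6)
    (hsmooth : l5 ≠ 0 ∨ (l2 ≠ 0 ∧ l4 ≠ 0)) :
    coincideLocally ℂ ![l1, l2, l3, l4, l5, l6]
      (bautinIdeal ℂ)
      (Ideal.span {X 0, X 2 - X 5}) := by
  classical
  set p : Fin 6 → ℂ := ![l1, l2, l3, l4, l5, l6] with hp
  set φ := algebraMap (MvPolynomial (Fin 6) ℂ) (Localization (nonVanishing ℂ p)) with hφ
  have h0 : (X 0 : MvPolynomial (Fin 6) ℂ) ∈ Ideal.span {X 0, X 2 - X 5} :=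
    Ideal.subset_span (by simp)
  have h25 : (X 2 - X 5 : MvPolynomial (Fin 6) ℂ) ∈ Ideal.span {X 0, X 2 - X 5} :=
    Ideal.subset_span (by simp)
  apply le_antisymm
  · apply Ideal.map_mono
    rw [bautinIdeal, Ideal.span_le]
    intro f hf
    simp only [Set.mem_insert_iff, Set.mem_singleton_iff] at hf
    rcases hf with rfl | rfl | rfl | rfl
    · exact h0
    · exact Ideal.mul_mem_left _ _ h25
    · exact Ideal.mul_mem_right _ _ (Ideal.mul_mem_left _ _ h25)
    · refine Ideal.mul_mem_right _ _ ?_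
      rw [pow_two, ← mul_assoc]
      exact Ideal.mul_mem_left _ _ h25
  · rw [Ideal.map_le_iff_le_comap, Ideal.span_le]
    intro f hf
    simp only [Set.mem_insert_iff, Set.mem_singleton_iff] at hf
    rcases hf with rfl | rfl
    · exact Ideal.mem_map_of_mem φ (Ideal.subset_span (by simp [bautinIdeal]))
    · -- need φ (X 2 - X 5) ∈ map φ (bautinIdeal ℂ)
      obtain ⟨c, hc, v, hv, hcv⟩ :
          ∃ c : MvPolynomial (Fin 6) ℂ, c ∈ nonVanishing ℂ p ∧
            ∃ v ∈ bautinIdeal ℂ, c * (X 2 - X 5) = v := by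
        rcases hsmooth with h5 | ⟨hl2, hl4⟩
        · refine ⟨X 4, ?_, X 4 * (X 2 - X 5),
            Ideal.subset_span (by simp [bautinIdeal]), rfl⟩
          show eval p (X 4) ≠ 0
          simpa [hp] using h5
        · refine ⟨X 1 * X 3 * (X 3 + 5 * X 2 - 5 * X 5), ?_,
            X 1 * X 3 * (X 2 - X 5) * (X 3 + 5 * X 2 - 5 * X 5),
            Ideal.subset_span (by simp [bautinIdeal]), by ring⟩
          show eval p (X 1 * X 3 * (X 3 + 5 * X 2 - 5 * X 5)) ≠ 0
          have : eval p (X 1 * X 3 * (X 3 + 5 * X 2 - 5 * X 5))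
              = l2 * l4 * (l4 + 5 * l3 - 5 * l6) := by
            simp [hp]
          rw [this, h36]
          have : l4 + 5 * l6 - 5 * l6 = l4 := by ring
          rw [this]
          exact mul_ne_zero (mul_ne_zero hl2 hl4) hl4
      have hu : IsUnit (φ c) :=
        IsLocalization.map_units (Localization (nonVanishing ℂ p)) (⟨c, hc⟩ : nonVanishing ℂ p)
      have hmem : φ c * φ (X 2 - X 5) ∈ Ideal.map φ (bautinIdeal ℂ) := by
        rw [← map_mul, hcv]
        exact Ideal.mem_map_of_mem φ hv
      exact (Ideal.unit_mul_mem_iff_mem _ hu).mp hmem
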